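/- For all 0 < ε < 1/2, μ ≥ 1, m, n ≥ 3, k ≥ 1, there exists a finite set S(μ,ε) ⊆ ℝ^{m×n} of cardinality at most (mnk/ε)^{3(m+n)k} such that for every μ-incoherent matrix X ∈ ℝ^{m×n} of rank at most k with spectral norm ‖X‖₂ = 1, there exists Y ∈ S(μ,ε) with ‖Y - X‖_F < ε and Y is 4μ√k-regular. -/

import Mathlib

open scoped BigOperators

/-- Squared Frobenius norm. -/
noncomputable def froSq {m n : ℕ} (X : Matrix (Fin m) (Fin n) ℝ) : ℝ :=
  ∑ i, ∑ j, (X i j) ^ 2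

/-- Frobenius norm. -/
noncomputable def fro {m n : ℕ} (X : Matrix (Fin m) (Fin n) ℝ) : ℝ :=
  Real.sqrt (froSq X)

/-- Spectral (operator) norm of a matrix, viewed as a map between Euclidean spaces. -/
noncomputable def specNorm {m n : ℕ} (X : Matrix (Fin m) (Fin n) ℝ) : ℝ :=
  ‖LinearMap.toContinuousLinearMap (Matrix.toEuclideanLin X)‖

/-- `X` is `α`-regular: every entry is at most `(α/√(mn))‖X‖_F` in absolute value. -/
def Regular {m n : ℕ} (α : ℝ) (X : Matrix (Fin m) (Fin n) ℝ) : Prop :=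
  ∀ i j, |X i j| ≤ (α / Real.sqrt (m * n)) * fro X

/-- `X` is `μc`-incoherent with rank at most `k`. -/
def Incoherent {m n : ℕ} (μc : ℝ) (k : ℕ) (X : Matrix (Fin m) (Fin n) ℝ) : Prop :=
  ∃ (U : Matrix (Fin m) (Fin k) ℝ) (S : Matrix (Fin k) (Fin k) ℝ)
    (V : Matrix (Fin n) (Fin k) ℝ),
    X = U * S * V.transpose ∧ U.transpose * U = 1 ∧ V.transpose * V = 1 ∧
    (∀ l l' : Fin k, l ≠ l' → S l l' = 0) ∧ (∀ l : Fin k, 0 ≤ S l l) ∧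
    (∀ (i : Fin m) (l : Fin k), |U i l| ≤ Real.sqrt (μc / m)) ∧
    (∀ (j : Fin n) (l : Fin k), |V j l| ≤ Real.sqrt (μc / n))

/-! ### Auxiliary lemmas -/

section Aux

lemma EN.froSq_nonneg {m n : ℕ} (X : Matrix (Fin m) (Fin n) ℝ) : 0 ≤ froSq X :=
  Finset.sum_nonneg fun _ _ => Finset.sum_nonneg fun _ _ => sq_nonneg _

lemma EN.fro_nonneg {m n : ℕ} (X : Matrix (Fin m) (Fin n) ℝ) : 0 ≤ fro X :=
  Real.sqrt_nonneg _

lemma EN.fro_eq_norm {m n : ℕ} (X : Matrix (Fin m) (Fin n) ℝ) :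
    fro X = ‖((WithLp.equiv 2 (Fin m × Fin n → ℝ)).symm (fun p => X p.1 p.2) :
      EuclideanSpace ℝ (Fin m × Fin n))‖ := by
  rw [EuclideanSpace.norm_eq, fro, froSq]
  congr 1
  rw [Fintype.sum_prod_type]
  simp [Real.norm_eq_abs, sq_abs]

lemma EN.fro_sub_le {m n : ℕ} (X Y : Matrix (Fin m) (Fin n) ℝ) :
    fro X - fro (X - Y) ≤ fro Y := by
  rw [EN.fro_eq_norm X, EN.fro_eq_norm Y, EN.fro_eq_norm (X - Y)]
  have h : ((WithLp.equiv 2 (Fin m × Fin n → ℝ)).symm (fun p => X p.1 p.2) :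
      EuclideanSpace ℝ (Fin m × Fin n)) =
      (WithLp.equiv 2 (Fin m × Fin n → ℝ)).symm (fun p => (X - Y) p.1 p.2) +
      (WithLp.equiv 2 (Fin m × Fin n → ℝ)).symm (fun p => Y p.1 p.2) := by
    ext p; simp [Matrix.sub_apply]
  rw [h]
  have := norm_add_le ((WithLp.equiv 2 (Fin m × Fin n → ℝ)).symm
      (fun p => (X - Y) p.1 p.2) : EuclideanSpace ℝ (Fin m × Fin n))
      ((WithLp.equiv 2 (Fin m × Fin n → ℝ)).symm (fun p => Y p.1 p.2))
  linarith

lemma EN.fro_sub_comm {m n : ℕ} (X Y : Matrix (Fin m) (Fin n) ℝ) :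
    fro (X - Y) = fro (Y - X) := by
  unfold fro froSq
  congr 1
  refine Finset.sum_congr rfl fun i _ => Finset.sum_congr rfl fun j _ => ?_
  have h : (X - Y) i j = -((Y - X) i j) := by
    simp only [Matrix.sub_apply]; ring
  rw [h, neg_sq]

lemma EN.norm_toEuclideanLin_apply {m n : ℕ} (X : Matrix (Fin m) (Fin n) ℝ)
    (v : EuclideanSpace ℝ (Fin n)) :
    ‖LinearMap.toContinuousLinearMap (Matrix.toEuclideanLin X) v‖
      = Real.sqrt (∑ i, (∑ j, X i j * v j) ^ 2) := by
  rw [LinearMap.coe_toContinuousLinearMap', EuclideanSpace.norm_eq]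
  congr 1
  refine Finset.sum_congr rfl fun i _ => ?_
  rw [Real.norm_eq_abs, sq_abs, Matrix.toEuclideanLin_apply]
  rfl

lemma EN.specNorm_le_fro {m n : ℕ} (X : Matrix (Fin m) (Fin n) ℝ) :
    specNorm X ≤ fro X := by
  apply ContinuousLinearMap.opNorm_le_bound
  · exact Real.sqrt_nonneg _
  intro v
  rw [EN.norm_toEuclideanLin_apply, EuclideanSpace.norm_eq, fro,
    ← Real.sqrt_mul (EN.froSq_nonneg X)]
  apply Real.sqrt_le_sqrt
  calc ∑ i, (∑ j, X i j * v j) ^ 2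
      ≤ ∑ i, (∑ j, (X i j) ^ 2) * (∑ j, (v j) ^ 2) :=
        Finset.sum_le_sum fun i _ => Finset.sum_mul_sq_le_sq_mul_sq _ _ _
    _ = froSq X * ∑ j, (v j) ^ 2 := by rw [froSq, Finset.sum_mul]
    _ = froSq X * ∑ j, ‖v j‖ ^ 2 := by simp [Real.norm_eq_abs, sq_abs]

lemma EN.mulVec_le_specNorm {m n : ℕ} (X : Matrix (Fin m) (Fin n) ℝ) (v : Fin n → ℝ) :
    Real.sqrt (∑ i, (∑ j, X i j * v j) ^ 2)
      ≤ specNorm X * Real.sqrt (∑ j, (v j) ^ 2) := by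
  have h := (LinearMap.toContinuousLinearMap (Matrix.toEuclideanLin X)).le_opNorm
    ((WithLp.equiv 2 (Fin n → ℝ)).symm v)
  rw [EN.norm_toEuclideanLin_apply, EuclideanSpace.norm_eq] at h
  convert h using 3
  simp [Real.norm_eq_abs, sq_abs]
  · rfl
  · simp [Real.norm_eq_abs, sq_abs]

variable {p q : ℕ} {X : Matrix (Fin p) (Fin q) ℝ}

lemma EN.entry_formula {k : ℕ} {U : Matrix (Fin p) (Fin k) ℝ} {S : Matrix (Fin k) (Fin k) ℝ}
    {V : Matrix (Fin q) (Fin k) ℝ} (hX : X = U * S * V.transpose)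
    (hS : ∀ l l' : Fin k, l ≠ l' → S l l' = 0) (i : Fin p) (j : Fin q) :
    X i j = ∑ l, U i l * S l l * V j l := by
  subst hX
  rw [Matrix.mul_apply]
  refine Finset.sum_congr rfl fun l _ => ?_
  rw [Matrix.mul_apply, Matrix.transpose_apply, Finset.sum_mul]
  rw [Finset.sum_eq_single l]
  · intro l' _ hne
    rw [hS l' l hne]; ring
  · intro h; exact absurd (Finset.mem_univ l) h

lemma EN.col_normsq {k : ℕ} {V : Matrix (Fin q) (Fin k) ℝ}
    (hV : V.transpose * V = 1) (l : Fin k) : ∑ j, (V j l) ^ 2 = 1 := by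
  have h := congrFun (congrFun hV l) l
  rw [Matrix.mul_apply, Matrix.one_apply_eq] at h
  rw [← h]
  refine Finset.sum_congr rfl fun j _ => ?_
  rw [Matrix.transpose_apply]; ring

lemma EN.entry_abs_le_one {k : ℕ} {V : Matrix (Fin q) (Fin k) ℝ}
    (hV : V.transpose * V = 1) (j : Fin q) (l : Fin k) : |V j l| ≤ 1 := by
  rw [← sq_le_one_iff_abs_le_one]
  calc (V j l) ^ 2 ≤ ∑ j', (V j' l) ^ 2 :=
        Finset.single_le_sum (f := fun j' => (V j' l) ^ 2)
          (fun _ _ => sq_nonneg _) (Finset.mem_univ j)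
    _ = 1 := EN.col_normsq hV l

lemma EN.froSq_eq_trace : froSq X = (X.transpose * X).trace := by
  rw [Matrix.trace, froSq, Finset.sum_comm]
  refine Finset.sum_congr rfl fun j _ => ?_
  rw [Matrix.diag_apply, Matrix.mul_apply]
  refine Finset.sum_congr rfl fun i _ => ?_
  rw [Matrix.transpose_apply]; ring

lemma EN.froSq_eq_sum {k : ℕ} {U : Matrix (Fin p) (Fin k) ℝ} {S : Matrix (Fin k) (Fin k) ℝ}
    {V : Matrix (Fin q) (Fin k) ℝ} (hX : X = U * S * V.transpose)
    (hU : U.transpose * U = 1) (hV : V.transpose * V = 1)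
    (hS : ∀ l l' : Fin k, l ≠ l' → S l l' = 0) :
    froSq X = ∑ l, (S l l) ^ 2 := by
  rw [EN.froSq_eq_trace, hX]
  have h1 : (U * S * V.transpose).transpose * (U * S * V.transpose)
      = V * (S.transpose * S) * V.transpose := by
    rw [Matrix.transpose_mul, Matrix.transpose_mul, Matrix.transpose_transpose]
    calc V * (S.transpose * U.transpose) * (U * S * V.transpose)
        = V * (S.transpose * ((U.transpose * U) * (S * V.transpose))) := by
          simp only [Matrix.mul_assoc]
      _ = V * (S.transpose * S) * V.transpose := by
          rw [hU, Matrix.one_mul]; simp only [Matrix.mul_assoc]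
  rw [h1, Matrix.trace_mul_comm, ← Matrix.mul_assoc, hV, Matrix.one_mul, Matrix.trace]
  refine Finset.sum_congr rfl fun l _ => ?_
  rw [Matrix.diag_apply, Matrix.mul_apply, Finset.sum_eq_single l]
  · rw [Matrix.transpose_apply]; ring
  · intro l' _ hne
    rw [Matrix.transpose_apply, hS l' l hne]; ring
  · intro h; exact absurd (Finset.mem_univ l) h

lemma EN.mulVec_col {k : ℕ} {U : Matrix (Fin p) (Fin k) ℝ} {S : Matrix (Fin k) (Fin k) ℝ}
    {V : Matrix (Fin q) (Fin k) ℝ} (hX : X = U * S * V.transpose)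
    (hV : V.transpose * V = 1) (hS : ∀ l l' : Fin k, l ≠ l' → S l l' = 0)
    (l : Fin k) (i : Fin p) : ∑ j, X i j * V j l = U i l * S l l := by
  calc ∑ j, X i j * V j l = ∑ j, ∑ l', U i l' * S l' l' * V j l' * V j l := by
        refine Finset.sum_congr rfl fun j _ => ?_
        rw [EN.entry_formula hX hS i j, Finset.sum_mul]
    _ = ∑ l', (U i l' * S l' l') * ∑ j, V j l' * V j l := by
        rw [Finset.sum_comm]
        refine Finset.sum_congr rfl fun l' _ => ?_
        rw [Finset.mul_sum]
        refine Finset.sum_congr rfl fun j _ => by ring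
    _ = U i l * S l l := by
        rw [Finset.sum_eq_single l]
        · have h := congrFun (congrFun hV l) l
          rw [Matrix.mul_apply, Matrix.one_apply_eq] at h
          simp only [Matrix.transpose_apply] at h
          rw [h, mul_one]
        · intro l' _ hne
          have h := congrFun (congrFun hV l') l
          rw [Matrix.mul_apply, Matrix.one_apply_ne hne] at h
          simp only [Matrix.transpose_apply] at h
          rw [h, mul_zero]
        · intro h; exact absurd (Finset.mem_univ l) h

lemma EN.sigma_le_specNorm {k : ℕ} {U : Matrix (Fin p) (Fin k) ℝ}
    {S : Matrix (Fin k) (Fin k) ℝ} {V : Matrix (Fin q) (Fin k) ℝ}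
    (hX : X = U * S * V.transpose) (hU : U.transpose * U = 1) (hV : V.transpose * V = 1)
    (hS : ∀ l l' : Fin k, l ≠ l' → S l l' = 0) (hSpos : ∀ l, 0 ≤ S l l) (l : Fin k) :
    S l l ≤ specNorm X := by
  have h := EN.mulVec_le_specNorm X (fun j => V j l)
  have h1 : ∑ i, (∑ j, X i j * V j l) ^ 2 = (S l l) ^ 2 := by
    calc ∑ i, (∑ j, X i j * V j l) ^ 2 = ∑ i, (U i l * S l l) ^ 2 := by
          refine Finset.sum_congr rfl fun i _ => ?_
          rw [EN.mulVec_col hX hV hS l i]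
      _ = (∑ i, (U i l) ^ 2) * (S l l) ^ 2 := by
          rw [Finset.sum_mul]
          refine Finset.sum_congr rfl fun i _ => by ring
      _ = (S l l) ^ 2 := by rw [EN.col_normsq hU l, one_mul]
  rw [h1, EN.col_normsq hV l, Real.sqrt_one, mul_one, Real.sqrt_sq (hSpos l)] at h
  exact h

/-! rounding -/

noncomputable def EN.rnd (ρ x : ℝ) : ℝ := ρ * ⌊x / ρ⌋

lemma EN.rnd_le {ρ x : ℝ} (hρ : 0 < ρ) : EN.rnd ρ x ≤ x := by
  have h := Int.floor_le (x / ρ)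
  calc EN.rnd ρ x = ρ * ⌊x / ρ⌋ := rfl
    _ ≤ ρ * (x / ρ) := by nlinarith
    _ = x := by field_simp

lemma EN.rnd_gt {ρ x : ℝ} (hρ : 0 < ρ) : x - ρ < EN.rnd ρ x := by
  have h := Int.lt_floor_add_one (x / ρ)
  have h2 : x / ρ * ρ < ((⌊x / ρ⌋ : ℝ) + 1) * ρ := by nlinarith
  have hx : x / ρ * ρ = x := by field_simp
  calc x - ρ = x / ρ * ρ - ρ := by rw [hx]
    _ < ((⌊x / ρ⌋ : ℝ) + 1) * ρ - ρ := by linarith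
    _ = EN.rnd ρ x := by rw [EN.rnd]; ring

lemma EN.abs_rnd_sub {ρ x : ℝ} (hρ : 0 < ρ) : |EN.rnd ρ x - x| ≤ ρ := by
  have h1 := EN.rnd_le (x := x) hρ
  have h2 := EN.rnd_gt (x := x) hρ
  rw [abs_le]; constructor <;> linarith

lemma EN.rnd_nonneg {ρ x : ℝ} (hρ : 0 < ρ) (hx : 0 ≤ x) : 0 ≤ EN.rnd ρ x := by
  have h : (0:ℤ) ≤ ⌊x / ρ⌋ := Int.floor_nonneg.2 (div_nonneg hx hρ.le)
  have h' : (0:ℝ) ≤ ⌊x / ρ⌋ := by exact_mod_cast h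
  exact mul_nonneg hρ.le h'

lemma EN.abs_rnd_le {ρ x : ℝ} (hρ : 0 < ρ) : |EN.rnd ρ x| ≤ |x| + ρ := by
  have h1 := EN.rnd_le (x := x) hρ
  have h2 := EN.rnd_gt (x := x) hρ
  rw [abs_le]
  have hx1 : -|x| ≤ x := neg_abs_le x
  have hx2 : x ≤ |x| := le_abs_self x
  constructor <;> linarith

noncomputable def EN.grid (ρ : ℝ) (N : ℕ) : Finset ℝ :=
  (Finset.Icc (-(N:ℤ)) (N:ℤ)).image (fun j : ℤ => ρ * (j:ℝ))

lemma EN.grid_card (ρ : ℝ) (N : ℕ) : (EN.grid ρ N).card ≤ 2 * N + 1 := by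
  refine (Finset.card_image_le).trans ?_
  rw [Int.card_Icc]
  omega

lemma EN.rnd_mem_grid {ρ x : ℝ} (hρ : 0 < ρ) (hx : |x| ≤ 1) (N : ℕ)
    (hN : 1/ρ + 1 ≤ (N:ℝ)) : EN.rnd ρ x ∈ EN.grid ρ N := by
  refine Finset.mem_image.2 ⟨⌊x / ρ⌋, ?_, rfl⟩
  rw [Finset.mem_Icc]
  have hone : 1 / ρ * ρ = 1 := by field_simp
  have hxl : -1 ≤ x := neg_le_of_abs_le hx
  have hxu : x ≤ 1 := le_of_abs_le hx
  constructor
  · rw [Int.le_floor]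
    push_cast
    have h3 : (1/ρ + 1) * ρ ≤ (N:ℝ) * ρ := mul_le_mul_of_nonneg_right hN hρ.le
    have h4 : (1/ρ + 1) * ρ = 1 + ρ := by field_simp
    rw [le_div_iff₀ hρ]
    linarith
  · have h1 : (⌊x / ρ⌋ : ℝ) ≤ x / ρ := Int.floor_le _
    have h2 : x / ρ ≤ 1 / ρ := by gcongr
    have h5 : (⌊x / ρ⌋ : ℝ) ≤ (N:ℝ) := by linarith
    exact_mod_cast h5

lemma EN.prod_err {ρ a b c ab bb cb : ℝ} (hρ : 0 < ρ) (hρ1 : ρ ≤ 1)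
    (ha : |a| ≤ 1) (hb : |b| ≤ 1) (hc : |c| ≤ 1)
    (h1 : |ab - a| ≤ ρ) (h2 : |bb - b| ≤ ρ) (h3 : |cb - c| ≤ ρ) :
    |ab * bb * cb - a * b * c| ≤ 7 * ρ := by
  have hbb : |bb| ≤ 2 := by
    calc |bb| = |b + (bb - b)| := by ring_nf
      _ ≤ |b| + |bb - b| := abs_add_le _ _
      _ ≤ 2 := by linarith
  have hcb : |cb| ≤ 2 := by
    calc |cb| = |c + (cb - c)| := by ring_nf
      _ ≤ |c| + |cb - c| := abs_add_le _ _
      _ ≤ 2 := by linarith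
  have e : ab * bb * cb - a * b * c
      = (ab - a) * bb * cb + a * (bb - b) * cb + a * b * (cb - c) := by ring
  calc |ab * bb * cb - a * b * c|
      ≤ |(ab - a) * bb * cb| + |a * (bb - b) * cb| + |a * b * (cb - c)| := by
        rw [e]; exact (abs_add_le _ _).trans (by gcongr; exact abs_add_le _ _)
    _ = |ab - a| * |bb| * |cb| + |a| * |bb - b| * |cb| + |a| * |b| * |cb - c| := by
        simp [abs_mul]
    _ ≤ ρ * 2 * 2 + 1 * ρ * 2 + 1 * 1 * ρ := by
        gcongr
    _ = 7 * ρ := by ring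
lemma EN.piFinset_card_matrix {a b : ℕ} (G : Finset ℝ) :
    (Fintype.piFinset (fun _ : Fin a => Fintype.piFinset (fun _ : Fin b => G)) :
      Finset (Matrix (Fin a) (Fin b) ℝ)).card = G.card ^ (b * a) := by
  rw [Fintype.card_piFinset]
  simp [Fintype.card_piFinset, Finset.prod_const, pow_mul]

lemma EN.piFinset_card_vec {b : ℕ} (G : Finset ℝ) :
    (Fintype.piFinset (fun _ : Fin b => G)).card = G.card ^ b := by
  rw [Fintype.card_piFinset]
  simp

lemma EN.num1 {mr nr kr sm eps t : ℝ} (hm3 : 3 ≤ mr) (hn3 : 3 ≤ nr) (hk1 : 1 ≤ kr)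
    (hsm3 : 3 ≤ sm) (hsm_sq : sm * sm = mr * nr) (he0 : 0 < eps)
    (ht_def : t = mr * nr * kr / eps) :
    42 * kr * sm / eps ≤ 14 * t := by
  have he : 14 * t = 14 * (mr*nr*kr) / eps := by rw [ht_def]; ring
  rw [he]
  have hnum : 42 * kr * sm ≤ 14 * (mr*nr*kr) := by
    have h3s : sm * 3 ≤ mr * nr := by nlinarith
    nlinarith
  gcongr

lemma EN.num5 {x y s A B : ℝ} (hx : 0 ≤ x) (hy : 0 ≤ y) (hs : 0 ≤ s)
    (hA : x ≤ A) (hB : y ≤ B) : x * s * y ≤ (A * B) * s := by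
  have h1 : x * s * y ≤ A * s * y :=
    mul_le_mul_of_nonneg_right (mul_le_mul_of_nonneg_right hA hs) hy
  have h2 : A * s * y ≤ A * s * B :=
    mul_le_mul_of_nonneg_left hB (mul_nonneg (hx.trans hA) hs)
  calc x * s * y ≤ A * s * B := h1.trans h2
    _ = (A * B) * s := by ring

lemma EN.num2 {x t : ℝ} (h : x ≤ 15 * t) (ht : 18 ≤ t) : x ≤ t ^ 2 := by nlinarith

lemma EN.num3 {mr nr kr eps t : ℝ} (hm3 : 3 ≤ mr) (hn3 : 3 ≤ nr) (hk1 : 1 ≤ kr)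
    (he0 : 0 < eps) (he1 : eps < 1/2) (ht_def : t = mr * nr * kr / eps) :
    18 ≤ t := by
  rw [ht_def, le_div_iff₀ he0]
  have h9 : (9:ℝ) ≤ mr * nr * kr := by nlinarith [mul_le_mul hm3 hn3 (by norm_num : (0:ℝ) ≤ 3) (by linarith : (0:ℝ) ≤ mr)]
  linarith

end Aux
set_option maxHeartbeats 2000000

theorem epsilon_net_for_incoherent_matrices {m n k : ℕ} (ε μc : ℝ)
    (hε0 : 0 < ε) (hε1 : ε < 1 / 2) (hμ : 1 ≤ μc)
    (hm : 3 ≤ m) (hn : 3 ≤ n) (hk : 1 ≤ k) :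
    ∃ S : Finset (Matrix (Fin m) (Fin n) ℝ),
      (S.card : ℝ) ≤ ((m : ℝ) * n * k / ε) ^ (3 * (m + n) * k) ∧
      ∀ X : Matrix (Fin m) (Fin n) ℝ, Incoherent μc k X → specNorm X = 1 →
        ∃ Y ∈ S, fro (Y - X) < ε ∧ Regular (4 * μc * Real.sqrt k) Y := by
  -- basic numeric facts
  have hm3 : (3:ℝ) ≤ (m:ℝ) := by exact_mod_cast hm
  have hn3 : (3:ℝ) ≤ (n:ℝ) := by exact_mod_cast hn
  have hk1 : (1:ℝ) ≤ (k:ℝ) := by exact_mod_cast hk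
  have hmn9 : (9:ℝ) ≤ (m:ℝ) * n := by nlinarith
  have hmn0 : (0:ℝ) < (m:ℝ) * n := by nlinarith
  obtain ⟨sm, hsm_def⟩ : ∃ x : ℝ, x = Real.sqrt ((m:ℝ) * n) := ⟨_, rfl⟩
  have hsm3 : (3:ℝ) ≤ sm := by
    have h9 : (3:ℝ) = Real.sqrt 9 := by
      rw [show (9:ℝ) = 3^2 by norm_num, Real.sqrt_sq (by norm_num)]
    rw [h9, hsm_def]
    exact Real.sqrt_le_sqrt hmn9
  have hsm0 : (0:ℝ) < sm := by linarith
  have hsm_sq : sm * sm = (m:ℝ) * n := by rw [hsm_def]; exact Real.mul_self_sqrt hmn0.le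
  obtain ⟨ρ, hρ_def⟩ : ∃ x : ℝ, x = ε / (21 * k * sm) := ⟨_, rfl⟩
  have hρ : 0 < ρ := by
    rw [hρ_def]
    apply div_pos hε0
    positivity
  have hρ42 : ρ ≤ 1 / (42 * sm) := by
    rw [hρ_def, div_le_div_iff₀ (by positivity) (by positivity)]
    nlinarith
  have hρ1 : ρ ≤ 1 := by
    have : 1 / (42 * sm) ≤ 1 := by
      rw [div_le_one (by positivity)]; nlinarith
    linarith
  obtain ⟨N, hN_def⟩ : ∃ x : ℕ, x = ⌈1/ρ⌉₊ + 1 := ⟨_, rfl⟩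
  have hN : 1/ρ + 1 ≤ (N:ℝ) := by
    have := Nat.le_ceil (1/ρ)
    push_cast [hN_def]
    linarith
  have hNle : (N:ℝ) ≤ 1/ρ + 2 := by
    have h := Nat.ceil_lt_add_one (show (0:ℝ) ≤ 1/ρ by positivity)
    push_cast [hN_def]
    linarith
  obtain ⟨G, hG_def⟩ : ∃ x : Finset ℝ, x = EN.grid ρ N := ⟨_, rfl⟩
  obtain ⟨gridU, hgU⟩ : ∃ x : Finset (Matrix (Fin m) (Fin k) ℝ),
    x = Fintype.piFinset (fun _ : Fin m => Fintype.piFinset (fun _ : Fin k => G)) := ⟨_, rfl⟩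
  obtain ⟨gridD, hgD⟩ : ∃ x : Finset (Fin k → ℝ),
    x = Fintype.piFinset (fun _ : Fin k => G) := ⟨_, rfl⟩
  obtain ⟨gridV, hgV⟩ : ∃ x : Finset (Matrix (Fin n) (Fin k) ℝ),
    x = Fintype.piFinset (fun _ : Fin n => Fintype.piFinset (fun _ : Fin k => G)) := ⟨_, rfl⟩
  refine ⟨(gridU ×ˢ gridD ×ˢ gridV).image
    (fun t => t.1 * Matrix.diagonal t.2.1 * (t.2.2).transpose), ?_, ?_⟩
  · -- cardinality bound
    obtain ⟨t, ht_def⟩ : ∃ x : ℝ, x = (m:ℝ) * n * k / ε := ⟨_, rfl⟩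
    rw [← ht_def]
    have ht18 : (18:ℝ) ≤ t := EN.num3 hm3 hn3 hk1 hε0 hε1 ht_def
    have ht1 : (1:ℝ) ≤ t := by linarith
    -- card of G
    have hGcard : (G.card : ℝ) ≤ t^2 := by
      have h1 : (G.card : ℝ) ≤ 2 * (N:ℝ) + 1 := by
        rw [hG_def]
        exact_mod_cast EN.grid_card ρ N
      have h2 : 2 * (N:ℝ) + 1 ≤ 2/ρ + 5 := by
        have hr : 2/ρ = 2*(1/ρ) := by ring
        linarith
      have h3 : 2/ρ = 42 * k * sm / ε := by
        rw [hρ_def]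
        field_simp
        ring
      have h4 : 42 * (k:ℝ) * sm / ε ≤ 14 * t :=
        EN.num1 hm3 hn3 hk1 hsm3 hsm_sq hε0 ht_def
      have h5 : (5:ℝ) ≤ t := by linarith
      have h6 : (G.card : ℝ) ≤ 15 * t := by
        rw [← h3] at h4
        linarith
      exact EN.num2 h6 ht18
    -- card of the image
    have hcards : ((gridU ×ˢ gridD ×ˢ gridV).card : ℝ)
        ≤ (G.card : ℝ) ^ (k*m + k + k*n) := by
      have hU : gridU.card = G.card ^ (k * m) := by rw [hgU]; exact EN.piFinset_card_matrix G
      have hD : gridD.card = G.card ^ k := by rw [hgD]; exact EN.piFinset_card_vec G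
      have hV : gridV.card = G.card ^ (k * n) := by rw [hgV]; exact EN.piFinset_card_matrix G
      rw [Finset.card_product, Finset.card_product, hU, hD, hV]
      push_cast
      rw [← pow_add, ← pow_add]
      apply le_of_eq
      congr 1
      omega
    calc ((Finset.image _ (gridU ×ˢ gridD ×ˢ gridV)).card : ℝ)
        ≤ ((gridU ×ˢ gridD ×ˢ gridV).card : ℝ) := by
          exact_mod_cast Finset.card_image_le
      _ ≤ (G.card : ℝ) ^ (k*m + k + k*n) := hcards
      _ ≤ (t^2) ^ (k*m + k + k*n) := by
          apply pow_le_pow_left₀ (by positivity) hGcard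
      _ = t ^ (2 * (k*m + k + k*n)) := by rw [← pow_mul]
      _ ≤ t ^ (3 * (m + n) * k) := by
          apply pow_le_pow_right₀ ht1
          have : 2*m + 2*n + 2 ≤ 3*(m+n) := by omega
          calc 2 * (k*m + k + k*n) = k * (2*m + 2*n + 2) := by ring
            _ ≤ k * (3*(m+n)) := Nat.mul_le_mul_left k this
            _ = 3 * (m+n) * k := by ring
  · -- approximation property
    intro X hInc hXnorm
    obtain ⟨U, Sd, V, hX, hU, hV, hSdiag, hSpos, hUinc, hVinc⟩ := hInc
    obtain ⟨Ub, hUb_def⟩ : ∃ x : Matrix (Fin m) (Fin k) ℝ,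
      x = fun i l => EN.rnd ρ (U i l) := ⟨_, rfl⟩
    obtain ⟨sb, hsb_def⟩ : ∃ x : Fin k → ℝ, x = fun l => EN.rnd ρ (Sd l l) := ⟨_, rfl⟩
    obtain ⟨Vb, hVb_def⟩ : ∃ x : Matrix (Fin n) (Fin k) ℝ,
      x = fun j l => EN.rnd ρ (V j l) := ⟨_, rfl⟩
    obtain ⟨Y, hY_def⟩ : ∃ x : Matrix (Fin m) (Fin n) ℝ,
      x = Ub * Matrix.diagonal sb * Vb.transpose := ⟨_, rfl⟩
    have hUbd : ∀ i l, |Ub i l - U i l| ≤ ρ := by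
      rw [hUb_def]; exact fun i l => EN.abs_rnd_sub hρ
    have hsbd : ∀ l, |sb l - Sd l l| ≤ ρ := by
      rw [hsb_def]; exact fun l => EN.abs_rnd_sub hρ
    have hVbd : ∀ j l, |Vb j l - V j l| ≤ ρ := by
      rw [hVb_def]; exact fun j l => EN.abs_rnd_sub hρ
    have hUabs : ∀ i l, |U i l| ≤ 1 := fun i l => EN.entry_abs_le_one hU i l
    have hVabs : ∀ j l, |V j l| ≤ 1 := fun j l => EN.entry_abs_le_one hV j l
    have hs1 : ∀ l, Sd l l ≤ 1 := by
      intro l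
      have := EN.sigma_le_specNorm hX hU hV hSdiag hSpos l
      rw [hXnorm] at this
      exact this
    have hsabs : ∀ l, |Sd l l| ≤ 1 := fun l => abs_le.2 ⟨by linarith [hSpos l], hs1 l⟩
    have hYdiag : ∀ l l' : Fin k, l ≠ l' → Matrix.diagonal sb l l' = 0 :=
      fun l l' h => Matrix.diagonal_apply_ne _ h
    have hYentry : ∀ i j, Y i j = ∑ l, Ub i l * sb l * Vb j l := by
      intro i j
      rw [EN.entry_formula hY_def hYdiag i j]
      simp [Matrix.diagonal_apply_eq]
    -- entrywise error
    have hent : ∀ i j, |Y i j - X i j| ≤ 7 * k * ρ := by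
      intro i j
      rw [hYentry i j, EN.entry_formula hX hSdiag i j, ← Finset.sum_sub_distrib]
      calc |∑ l, (Ub i l * sb l * Vb j l - U i l * Sd l l * V j l)|
          ≤ ∑ l, |Ub i l * sb l * Vb j l - U i l * Sd l l * V j l| :=
            Finset.abs_sum_le_sum_abs _ _
        _ ≤ ∑ _l : Fin k, 7 * ρ := by
            refine Finset.sum_le_sum fun l _ => ?_
            exact EN.prod_err hρ hρ1 (hUabs i l) (hsabs l) (hVabs j l)
              (hUbd i l) (hsbd l) (hVbd j l)
        _ = 7 * k * ρ := by
            rw [Finset.sum_const, Finset.card_univ, Fintype.card_fin, nsmul_eq_mul]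
            ring
    -- Frobenius error
    have hfroSq : froSq (Y - X) ≤ ((m:ℝ) * n) * (7 * k * ρ)^2 := by
      rw [froSq]
      calc ∑ i, ∑ j, ((Y - X) i j)^2
          ≤ ∑ _i : Fin m, ∑ _j : Fin n, (7 * (k:ℝ) * ρ)^2 := by
            refine Finset.sum_le_sum fun i _ => Finset.sum_le_sum fun j _ => ?_
            have h := hent i j
            have : (Y - X) i j = Y i j - X i j := by simp [Matrix.sub_apply]
            rw [this, ← sq_abs]
            exact pow_le_pow_left₀ (abs_nonneg _) h 2
        _ = ((m:ℝ) * n) * (7 * k * ρ)^2 := by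
            rw [Finset.sum_const, Finset.sum_const, Finset.card_univ, Finset.card_univ]
            simp [nsmul_eq_mul]
            ring
    have hfro_err : fro (Y - X) ≤ ε / 3 := by
      have hval : sm * (7 * k * ρ) = ε / 3 := by
        rw [hρ_def]
        field_simp
        ring
      rw [fro]
      calc Real.sqrt (froSq (Y - X)) ≤ Real.sqrt (((m:ℝ)*n) * (7*k*ρ)^2) :=
            Real.sqrt_le_sqrt hfroSq
        _ = sm * (7*k*ρ) := by
            rw [Real.sqrt_mul hmn0.le, Real.sqrt_sq (by positivity), hsm_def]
        _ = ε / 3 := hval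
    -- fro X ≥ 1, fro Y ≥ (5/6) fro X
    have hfroX1 : 1 ≤ fro X := by
      have := EN.specNorm_le_fro X
      rw [hXnorm] at this
      exact this
    have hfroY : (5/6) * fro X ≤ fro Y := by
      have h1 := EN.fro_sub_le X Y
      have h2 : fro (X - Y) = fro (Y - X) := EN.fro_sub_comm X Y
      have h3 : fro (Y - X) ≤ ε / 3 := hfro_err
      have h4 : ε / 3 ≤ 1/6 := by linarith
      linarith
    refine ⟨Y, ?_, ?_, ?_⟩
    · -- membership
      refine Finset.mem_image.2 ⟨(Ub, sb, Vb), ?_, hY_def.symm⟩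
      refine Finset.mem_product.2 ⟨?_, Finset.mem_product.2 ⟨?_, ?_⟩⟩
      · rw [hgU, hUb_def, hG_def]
        exact Fintype.mem_piFinset.2 fun i => Fintype.mem_piFinset.2 fun l =>
          EN.rnd_mem_grid hρ (hUabs i l) N hN
      · rw [hgD, hsb_def, hG_def]
        exact Fintype.mem_piFinset.2 fun l => EN.rnd_mem_grid hρ (hsabs l) N hN
      · rw [hgV, hVb_def, hG_def]
        exact Fintype.mem_piFinset.2 fun j => Fintype.mem_piFinset.2 fun l =>
          EN.rnd_mem_grid hρ (hVabs j l) N hN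
    · -- fro (Y - X) < ε
      calc fro (Y - X) ≤ ε / 3 := hfro_err
        _ < ε := by linarith
    · -- regularity
      intro i j
      have hsb_nonneg : ∀ l, 0 ≤ sb l := by
        rw [hsb_def]; exact fun l => EN.rnd_nonneg hρ (hSpos l)
      have hsb_le : ∀ l, sb l ≤ Sd l l := by
        rw [hsb_def]; exact fun l => EN.rnd_le hρ
      obtain ⟨sμm, hsμm_def⟩ : ∃ x : ℝ, x = Real.sqrt (μc / m) := ⟨_, rfl⟩
      obtain ⟨sμn, hsμn_def⟩ : ∃ x : ℝ, x = Real.sqrt (μc / n) := ⟨_, rfl⟩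
      have hμ0 : (0:ℝ) ≤ μc := by linarith
      have hsμm0 : 0 ≤ sμm := hsμm_def ▸ Real.sqrt_nonneg _
      have hsμn0 : 0 ≤ sμn := hsμn_def ▸ Real.sqrt_nonneg _
      have hUb_abs : ∀ l, |Ub i l| ≤ sμm + ρ := by
        rw [hUb_def, hsμm_def]
        exact fun l => (EN.abs_rnd_le hρ).trans (by have := hUinc i l; linarith)
      have hVb_abs : ∀ l, |Vb j l| ≤ sμn + ρ := by
        rw [hVb_def, hsμn_def]
        exact fun l => (EN.abs_rnd_le hρ).trans (by have := hVinc j l; linarith)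
      -- step 1: |Y i j| ≤ P * ∑ sb
      have step1 : |Y i j| ≤ ((sμm + ρ) * (sμn + ρ)) * ∑ l, sb l := by
        rw [hYentry i j]
        calc |∑ l, Ub i l * sb l * Vb j l|
            ≤ ∑ l, |Ub i l * sb l * Vb j l| := Finset.abs_sum_le_sum_abs _ _
          _ ≤ ∑ l, ((sμm + ρ) * (sμn + ρ)) * sb l := by
              refine Finset.sum_le_sum fun l _ => ?_
              rw [abs_mul, abs_mul, abs_of_nonneg (hsb_nonneg l)]
              exact EN.num5 (abs_nonneg _) (abs_nonneg _) (hsb_nonneg l)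
                (hUb_abs l) (hVb_abs l)
          _ = ((sμm + ρ) * (sμn + ρ)) * ∑ l, sb l := by rw [Finset.mul_sum]
      -- step 2: ∑ sb ≤ √k * fro X
      have step2 : ∑ l, sb l ≤ Real.sqrt k * fro X := by
        have h1 : ∑ l, sb l ≤ ∑ l, Sd l l := Finset.sum_le_sum fun l _ => hsb_le l
        have hCS : (∑ l, Sd l l)^2 ≤ (k:ℝ) * ∑ l, (Sd l l)^2 := by
          have := Finset.sum_mul_sq_le_sq_mul_sq Finset.univ
            (fun _ : Fin k => (1:ℝ)) (fun l => Sd l l)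
          simpa using this
        have hsum_nonneg : 0 ≤ ∑ l, Sd l l :=
          Finset.sum_nonneg fun l _ => hSpos l
        have h2 : ∑ l, Sd l l ≤ Real.sqrt ((k:ℝ) * ∑ l, (Sd l l)^2) := by
          rw [← Real.sqrt_sq hsum_nonneg]
          exact Real.sqrt_le_sqrt hCS
        have h3 : Real.sqrt ((k:ℝ) * ∑ l, (Sd l l)^2)
            = Real.sqrt k * fro X := by
          rw [Real.sqrt_mul (by positivity), fro,
            EN.froSq_eq_sum hX hU hV hSdiag]
        linarith
      -- step 5: product bound
      have hsμm_lb : 1 / sm ≤ sμm := by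
        rw [hsμm_def]
        have h1 : (1:ℝ)/((m:ℝ)*n) ≤ μc / m := by
          rw [div_le_div_iff₀ hmn0 (by linarith)]
          nlinarith
        calc 1 / sm = Real.sqrt (1 / ((m:ℝ)*n)) := by
              rw [one_div, one_div, Real.sqrt_inv, hsm_def]
          _ ≤ Real.sqrt (μc / m) := Real.sqrt_le_sqrt h1
      have hsμn_lb : 1 / sm ≤ sμn := by
        rw [hsμn_def]
        have h1 : (1:ℝ)/((m:ℝ)*n) ≤ μc / n := by
          rw [div_le_div_iff₀ hmn0 (by linarith)]
          nlinarith
        calc 1 / sm = Real.sqrt (1 / ((m:ℝ)*n)) := by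
              rw [one_div, one_div, Real.sqrt_inv, hsm_def]
          _ ≤ Real.sqrt (μc / n) := Real.sqrt_le_sqrt h1
      have hρ_small_m : ρ ≤ (1/42) * sμm := by
        have : 1/(42*sm) = (1/42) * (1/sm) := by ring
        calc ρ ≤ 1/(42*sm) := hρ42
          _ = (1/42) * (1/sm) := this
          _ ≤ (1/42) * sμm := by nlinarith
      have hρ_small_n : ρ ≤ (1/42) * sμn := by
        have : 1/(42*sm) = (1/42) * (1/sm) := by ring
        calc ρ ≤ 1/(42*sm) := hρ42
          _ = (1/42) * (1/sm) := this
          _ ≤ (1/42) * sμn := by nlinarith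
      have hprod : sμm * sμn = μc / sm := by
        rw [hsμm_def, hsμn_def, ← Real.sqrt_mul (by positivity)]
        have : μc / m * (μc / n) = μc^2 / ((m:ℝ)*n) := by
          field_simp
        rw [this, Real.sqrt_div (by positivity), Real.sqrt_sq hμ0, hsm_def]
      have step5 : (sμm + ρ) * (sμn + ρ) ≤ 2 * (μc / sm) := by
        have h1 : sμm + ρ ≤ (43/42) * sμm := by linarith [hρ_small_m]
        have h2 : sμn + ρ ≤ (43/42) * sμn := by linarith [hρ_small_n]
        calc (sμm + ρ) * (sμn + ρ) ≤ ((43/42) * sμm) * ((43/42) * sμn) := by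
              apply mul_le_mul h1 h2 (by positivity) (by positivity)
          _ = (43/42)^2 * (sμm * sμn) := by ring
          _ = (43/42)^2 * (μc / sm) := by rw [hprod]
          _ ≤ 2 * (μc / sm) := by
              have : (0:ℝ) ≤ μc / sm := by positivity
              nlinarith
      -- combine
      have hsk0 : (0:ℝ) ≤ Real.sqrt k := Real.sqrt_nonneg _
      have hfroX0 : (0:ℝ) ≤ fro X := by linarith
      have hfroY0 : (0:ℝ) ≤ fro Y := EN.fro_nonneg Y
      have hfin : ((sμm + ρ) * (sμn + ρ)) * ∑ l, sb l
          ≤ (4 * μc * Real.sqrt k / sm) * fro Y := by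
        have hsb_sum_nonneg : 0 ≤ ∑ l, sb l :=
          Finset.sum_nonneg fun l _ => hsb_nonneg l
        calc ((sμm + ρ) * (sμn + ρ)) * ∑ l, sb l
            ≤ (2 * (μc / sm)) * ∑ l, sb l := by
              apply mul_le_mul_of_nonneg_right step5 hsb_sum_nonneg
          _ ≤ (2 * (μc / sm)) * (Real.sqrt k * fro X) := by
              apply mul_le_mul_of_nonneg_left step2 (by positivity)
          _ ≤ (2 * (μc / sm)) * (Real.sqrt k * ((6/5) * fro Y)) := by
              have hX6 : fro X ≤ (6/5) * fro Y := by linarith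
              apply mul_le_mul_of_nonneg_left ?_ (by positivity)
              apply mul_le_mul_of_nonneg_left hX6 hsk0
          _ ≤ (4 * μc * Real.sqrt k / sm) * fro Y := by
              have hz : 0 ≤ μc * Real.sqrt k * fro Y :=
                mul_nonneg (mul_nonneg hμ0 hsk0) hfroY0
              have e1 : 2 * (μc / sm) * (Real.sqrt k * (6/5 * fro Y))
                  = (12/5) * (μc * Real.sqrt k * fro Y) / sm := by
                field_simp; ring
              have e2 : (4 * μc * Real.sqrt k / sm) * fro Y
                  = 4 * (μc * Real.sqrt k * fro Y) / sm := by ring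
              rw [e1, e2]
              apply (div_le_div_iff_of_pos_right hsm0).mpr
              linarith
      calc |Y i j| ≤ ((sμm + ρ) * (sμn + ρ)) * ∑ l, sb l := step1
        _ ≤ (4 * μc * Real.sqrt k / sm) * fro Y := hfin
        _ = (4 * μc * Real.sqrt k / Real.sqrt ((m:ℝ)*n)) * fro Y := by rw [hsm_def]
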